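/- Let {H_n} be a Positive Linear Recurrence Sequence with length L and size S. Let n > 2L and 0 ≤ t < S. Let S_t = {ω ∈ Ω_n : Z_n(ω) = t}, and let h_t(ω) denote the legal decomposition obtained from ω by removing its second-to-last block and shifting all indices to the left of that block down by ℓ(t). Then for every ω ∈ S_t, h_t(ω) is a legal decomposition lying in Ω_{n−ℓ(t)}, and h_t is a bijection between S_t and Ω_{n−ℓ(t)}. -/

import Mathlib

open scoped BigOperators
open Filter

/-- A Positive Linear Recurrence Sequence (PLRS): a sequence `H` of positive integers
satisfying `H (n+1) = c 1 * H n + ⋯ + c L * H (n+1-L)` for `n ≥ L`, with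
`H 1 = 1` and initial conditions `H (n+1) = c 1 * H n + ⋯ + c n * H 1 + 1` for `1 ≤ n < L`. -/
structure PLRS where
  /-- the length of the recurrence -/
  L : ℕ
  /-- the coefficients of the recurrence (indexed from 1) -/
  c : ℕ → ℕ
  /-- the sequence itself (indexed from 1) -/
  H : ℕ → ℕ
  L_pos : 0 < L
  c1_pos : 0 < c 1
  cL_pos : 0 < c L
  H_pos : ∀ n, 1 ≤ n → 0 < H n
  H_one : H 1 = 1
  H_rec : ∀ n, L ≤ n → H (n + 1) = ∑ i ∈ Finset.Icc 1 L, c i * H (n + 1 - i)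
  H_init : ∀ n, 1 ≤ n → n < L → H (n + 1) = (∑ i ∈ Finset.Icc 1 n, c i * H (n + 1 - i)) + 1

namespace PLRS

/-- The size `S = c 1 + ⋯ + c L` of a PLRS. -/
def size (P : PLRS) : ℕ := ∑ i ∈ Finset.Icc 1 P.L, P.c i

/-- Legality of a coefficient sequence `(a_1, …, a_m)` (as a list), not including the
requirement `a_1 > 0`: either (Condition 1) `m < L` and `a_i = c_i` for all `i`, or
(Condition 2) there is `s ∈ {1, …, L}` with `a_1 = c_1, …, a_{s-1} = c_{s-1}`, `a_s < c_s`,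
and `(a_{s+1}, …, a_m)` legal (possibly empty). -/
inductive IsLegal (P : PLRS) : List ℕ → Prop
  | cond1 (m : ℕ) (h1 : 1 ≤ m) (h2 : m < P.L) :
      IsLegal P ((List.range m).map fun i => P.c (i + 1))
  | cond2 (s : ℕ) (hs1 : 1 ≤ s) (hs2 : s ≤ P.L) (a : ℕ) (ha : a < P.c s)
      (rest : List ℕ) (hrest : IsLegal P rest) :
      IsLegal P (((List.range (s - 1)).map fun i => P.c (i + 1)) ++ a :: rest)
  | cond2_last (s : ℕ) (hs1 : 1 ≤ s) (hs2 : s ≤ P.L) (a : ℕ) (ha : a < P.c s) :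
      IsLegal P (((List.range (s - 1)).map fun i => P.c (i + 1)) ++ [a])

/-- A legal decomposition: a legal coefficient sequence with `a_1 > 0`. -/
def LegalDecomp (P : PLRS) (l : List ℕ) : Prop := P.IsLegal l ∧ 0 < l.headI

/-- The value `∑_{i=1}^m a_i H_{m+1-i}` of a coefficient sequence `(a_1, …, a_m)`. -/
def value (P : PLRS) (l : List ℕ) : ℕ :=
  ∑ i ∈ Finset.range l.length, l.getD i 0 * P.H (l.length - i)

/-- `Ω_n`: the set of legal decompositions of integers in `[H_n, H_{n+1})`. -/
def Omega (P : PLRS) (n : ℕ) : Set (List ℕ) :=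
  {l | P.LegalDecomp l ∧ P.H n ≤ P.value l ∧ P.value l < P.H (n + 1)}

/-- Expectation of `g` under the uniform probability measure on a (finite) set `A`. -/
noncomputable def expectOn (A : Set (List ℕ)) (g : List ℕ → ℝ) : ℝ :=
  (∑ᶠ l ∈ A, g l) / (A.ncard : ℝ)

/-- Variance of `g` under the uniform probability measure on a (finite) set `A`. -/
noncomputable def varOn (A : Set (List ℕ)) (g : List ℕ → ℝ) : ℝ :=
  expectOn A (fun l => g l ^ 2) - (expectOn A g) ^ 2

/-- Expectation of `g` under the uniform probability measure on `Ω_n`. -/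
noncomputable def expect (P : PLRS) (n : ℕ) (g : List ℕ → ℝ) : ℝ := expectOn (P.Omega n) g

/-- Probability of the event `A` under the uniform probability measure on `Ω_n`. -/
noncomputable def prob (P : PLRS) (n : ℕ) (A : Set (List ℕ)) : ℝ :=
  ((P.Omega n ∩ A).ncard : ℝ) / ((P.Omega n).ncard : ℝ)

/-- `E[K_n]`, the expected number of summands on `Ω_n`. -/
noncomputable def expectK (P : PLRS) (n : ℕ) : ℝ := P.expect n fun l => (l.sum : ℝ)

/-- `Var[K_n]`, the variance of the number of summands on `Ω_n`. -/
noncomputable def varK (P : PLRS) (n : ℕ) : ℝ := varOn (P.Omega n) fun l => (l.sum : ℝ)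

/-- The first index (0-based) at which the coefficient list disagrees with `c`. -/
def firstMismatch (P : PLRS) (l : List ℕ) : Option ℕ :=
  (List.range l.length).find? fun i => l.getD i 0 != P.c (i + 1)

/-- The block decomposition of a legal coefficient sequence: repeatedly split off the
Type 2 block `(c_1, …, c_{s-1}, a_s)` with `a_s ≠ c_s`; if the whole remaining sequence
agrees with `c` it is a single (Type 1) block. -/
def blocks (P : PLRS) (l : List ℕ) : List (List ℕ) :=
  if h : l = [] then []
  else
    match P.firstMismatch l with
    | none => [l]
    | some i => l.take (i + 1) :: P.blocks (l.drop (i + 1))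
termination_by l.length
decreasing_by
  have hl : 0 < l.length := List.length_pos_iff.mpr h
  simp only [List.length_drop]
  omega

/-- The second-to-last block of a legal decomposition. -/
def stlBlock (P : PLRS) (l : List ℕ) : List ℕ := ((P.blocks l).reverse).getD 1 []

/-- `Z_n(ω)`: the size (sum of coefficients) of the second-to-last block. -/
def Z (P : PLRS) (l : List ℕ) : ℕ := (P.stlBlock l).sum

/-- The length function `ℓ(t)`: the length of the Type 2 block of size `t`, i.e., the least
`s` with `t < c_1 + ⋯ + c_s`. -/
noncomputable def ell (P : PLRS) (t : ℕ) : ℕ :=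
  sInf {s : ℕ | t < ∑ i ∈ Finset.Icc 1 s, P.c i}

/-- `L_n(ω) = ℓ(Z_n(ω))`: the length of the second-to-last block. -/
noncomputable def Lfn (P : PLRS) (l : List ℕ) : ℕ := P.ell (P.Z l)

/-- `h_t`: remove the second-to-last block of a legal decomposition. -/
def removeSTL (P : PLRS) (l : List ℕ) : List ℕ :=
  ((((P.blocks l).reverse).eraseIdx 1).reverse).flatten

/-- The Type 2 block of size `t`: `(c_1, …, c_{ℓ(t)-1}, t - (c_1 + ⋯ + c_{ℓ(t)-1}))`. -/
noncomputable def type2Block (P : PLRS) (t : ℕ) : List ℕ :=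
  ((List.range (P.ell t - 1)).map fun i => P.c (i + 1)) ++
    [t - ∑ i ∈ Finset.Icc 1 (P.ell t - 1), P.c i]

/-- Insert the Type 2 block of size `t` immediately before the last block. -/
noncomputable def insertSTL (P : PLRS) (t : ℕ) (l : List ℕ) : List ℕ :=
  ((((P.blocks l).reverse).insertIdx 1 (P.type2Block t)).reverse).flatten

/-- A Type 1 block: `(c_1, …, c_m)` with `1 ≤ m < L`. -/
def IsType1Block (P : PLRS) (bl : List ℕ) : Prop :=
  ∃ m, 1 ≤ m ∧ m < P.L ∧ bl = (List.range m).map fun i => P.c (i + 1)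

/-- A Type 2 block: `(c_1, …, c_{s-1}, a)` with `1 ≤ s ≤ L` and `a < c_s`. -/
def IsType2Block (P : PLRS) (bl : List ℕ) : Prop :=
  ∃ s, 1 ≤ s ∧ s ≤ P.L ∧ ∃ a, a < P.c s ∧
    bl = ((List.range (s - 1)).map fun i => P.c (i + 1)) ++ [a]

/-- Conditional expectation of `g` on `Ω_n` given `Z_n = t`. -/
noncomputable def condExpect (P : PLRS) (n t : ℕ) (g : List ℕ → ℝ) : ℝ :=
  expectOn (P.Omega n ∩ {l | P.Z l = t}) g

end PLRS

open PLRS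

namespace PLRS

variable (P : PLRS)

lemma sum_Icc_c (k : ℕ) (f : ℕ → ℕ) :
    ∑ j ∈ Finset.Icc 1 k, P.c j * f j = ∑ i ∈ Finset.range k, P.c (i+1) * f (i+1) := by
  rw [← Finset.Ico_add_one_right_eq_Icc, Finset.sum_Ico_eq_sum_range]
  simp [add_comm]

lemma H_le_succ (n : ℕ) (hn : 1 ≤ n) : P.H n ≤ P.H (n + 1) := by
  have hc1 : 1 ≤ P.c 1 := P.c1_pos
  rcases lt_or_ge n P.L with h | h
  · rw [P.H_init n hn h]
    have : P.c 1 * P.H (n + 1 - 1) ≤ ∑ i ∈ Finset.Icc 1 n, P.c i * P.H (n + 1 - i) :=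
      Finset.single_le_sum (f := fun i => P.c i * P.H (n + 1 - i))
        (fun i _ => Nat.zero_le _) (Finset.mem_Icc.mpr ⟨le_refl 1, hn⟩)
    simp only [Nat.add_sub_cancel] at this
    calc P.H n = 1 * P.H n := (one_mul _).symm
    _ ≤ P.c 1 * P.H n := Nat.mul_le_mul_right _ hc1
    _ ≤ _ := le_trans this (Nat.le_succ _)
  · rw [P.H_rec n h]
    have : P.c 1 * P.H (n + 1 - 1) ≤ ∑ i ∈ Finset.Icc 1 P.L, P.c i * P.H (n + 1 - i) :=
      Finset.single_le_sum (f := fun i => P.c i * P.H (n + 1 - i))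
        (fun i _ => Nat.zero_le _) (Finset.mem_Icc.mpr ⟨le_refl 1, P.L_pos⟩)
    simp only [Nat.add_sub_cancel] at this
    calc P.H n = 1 * P.H n := (one_mul _).symm
    _ ≤ P.c 1 * P.H n := Nat.mul_le_mul_right _ hc1
    _ ≤ _ := this

lemma H_mono {m n : ℕ} (hm : 1 ≤ m) (hmn : m ≤ n) : P.H m ≤ P.H n := by
  induction n with
  | zero => omega
  | succ n ih =>
    rcases Nat.lt_or_ge m (n+1) with h | h
    · exact le_trans (ih (by omega)) (P.H_le_succ n (by omega))
    · have : m = n + 1 := by omega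
      rw [this]

lemma value_nil : P.value [] = 0 := by simp [value]

lemma value_cons (a : ℕ) (rest : List ℕ) :
    P.value (a :: rest) = a * P.H (rest.length + 1) + P.value rest := by
  unfold value
  simp only [List.length_cons]
  rw [Finset.sum_range_succ']
  simp only [List.getD_cons_succ, List.getD_cons_zero, Nat.sub_zero]
  rw [add_comm]
  congr 1
  apply Finset.sum_congr rfl
  intro i hi
  simp only [Finset.mem_range] at hi
  have : rest.length + 1 - (i + 1) = rest.length - i := by omega
  rw [this]

lemma value_prefix (k : ℕ) (xs : List ℕ) :
    P.value (((List.range k).map fun i => P.c (i+1)) ++ xs) =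
      (∑ j ∈ Finset.Icc 1 k, P.c j * P.H (k + xs.length + 1 - j)) + P.value xs := by
  unfold value
  have hlen : (((List.range k).map fun i => P.c (i+1)) ++ xs).length = k + xs.length := by
    simp
  rw [hlen, Finset.sum_range_add]
  congr 1
  · rw [P.sum_Icc_c k]
    apply Finset.sum_congr rfl
    intro i hi
    simp only [Finset.mem_range] at hi
    have h1 : (((List.range k).map fun i => P.c (i+1)) ++ xs).getD i 0 = P.c (i+1) := by
      rw [List.getD_append _ _ _ _ (by simpa using hi), List.getD_eq_getElem _ _ (by simpa using hi)]
      simp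
    rw [h1]
    have h2 : k + xs.length + 1 - (i + 1) = k + xs.length - i := by omega
    rw [h2]
  · apply Finset.sum_congr rfl
    intro i hi
    simp only [Finset.mem_range] at hi
    have h1 : (((List.range k).map fun i => P.c (i+1)) ++ xs).getD (k + i) 0 = xs.getD i 0 := by
      rw [List.getD_append_right _ _ _ _ (by simp)]
      simp
    rw [h1]
    have h2 : xs.length - i = k + xs.length - (k + i) := by omega
    rw [h2]

lemma isLegal_ne_nil {l : List ℕ} (h : P.IsLegal l) : l ≠ [] := by
  induction h with
  | cond1 m h1 h2 => simp; omega
  | cond2 s hs1 hs2 a ha rest hrest ih => simp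
  | cond2_last s hs1 hs2 a ha => simp

lemma value_lt (l : List ℕ) (h : P.IsLegal l) : P.value l < P.H (l.length + 1) := by
  induction h with
  | cond1 m h1 h2 =>
    have hlen : ((List.range m).map fun i => P.c (i+1)).length = m := by simp
    have := P.value_prefix m []
    simp only [List.append_nil, List.length_nil, add_zero, value_nil] at this
    rw [this, hlen, P.H_init m h1 h2]
    omega
  | cond2 s hs1 hs2 a ha rest hrest ih =>
    have hlen : (((List.range (s-1)).map fun i => P.c (i+1)) ++ a :: rest).length
        = s + rest.length := by simp; omega
    rw [hlen, P.value_prefix (s-1) (a :: rest), P.value_cons]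
    set r := rest.length with hr
    have hsr : (s - 1) + (a :: rest).length = s + r := by simp [hr]; omega
    rw [hsr]
    have hrest_lt : P.value rest < P.H (r + 1) := ih
    have key : ∑ j ∈ Finset.Icc 1 (s-1), P.c j * P.H (s + r + 1 - j)
        + (a * P.H (r + 1) + P.value rest)
        < ∑ j ∈ Finset.Icc 1 s, P.c j * P.H (s + r + 1 - j) := by
      obtain ⟨s', rfl⟩ : ∃ s', s = s' + 1 := ⟨s - 1, by omega⟩
      rw [Finset.sum_Icc_succ_top (by omega : 1 ≤ s' + 1)]
      simp only [Nat.add_sub_cancel]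
      set s := s' + 1
      have h2 : a * P.H (r+1) + P.value rest < P.c s * P.H (s + r + 1 - s) := by
        have : s + r + 1 - s = r + 1 := by omega
        rw [this]
        calc a * P.H (r+1) + P.value rest < a * P.H (r+1) + P.H (r+1) := by omega
        _ = (a + 1) * P.H (r+1) := by ring
        _ ≤ P.c s * P.H (r+1) := Nat.mul_le_mul_right _ (by omega)
      omega
    rcases Nat.lt_or_ge (s + r) P.L with hL | hL
    · rw [P.H_init (s + r) (by omega) hL]
      have hmono : ∑ j ∈ Finset.Icc 1 s, P.c j * P.H (s + r + 1 - j)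
          ≤ ∑ j ∈ Finset.Icc 1 (s + r), P.c j * P.H (s + r + 1 - j) :=
        Finset.sum_le_sum_of_subset (Finset.Icc_subset_Icc_right (by omega))
      omega
    · rw [P.H_rec (s + r) hL]
      have hmono : ∑ j ∈ Finset.Icc 1 s, P.c j * P.H (s + r + 1 - j)
          ≤ ∑ j ∈ Finset.Icc 1 P.L, P.c j * P.H (s + r + 1 - j) :=
        Finset.sum_le_sum_of_subset (Finset.Icc_subset_Icc_right hs2)
      omega
  | cond2_last s hs1 hs2 a ha =>
    have hlen : (((List.range (s-1)).map fun i => P.c (i+1)) ++ [a]).length = s := by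
      simp; omega
    rw [hlen, P.value_prefix (s-1) [a]]
    have h0 : P.value [a] = a * P.H 1 := by rw [value_cons]; simp [value_nil]
    rw [h0, P.H_one, mul_one]
    have hsr : (s - 1) + ([a] : List ℕ).length = s := by simp; omega
    rw [hsr]
    have key : ∑ j ∈ Finset.Icc 1 (s-1), P.c j * P.H (s + 1 - j) + a
        < ∑ j ∈ Finset.Icc 1 s, P.c j * P.H (s + 1 - j) := by
      obtain ⟨s', rfl⟩ : ∃ s', s = s' + 1 := ⟨s - 1, by omega⟩
      rw [Finset.sum_Icc_succ_top (by omega : 1 ≤ s' + 1)]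
      simp only [Nat.add_sub_cancel]
      set s := s' + 1
      have : s + 1 - s = 1 := by omega
      rw [this, P.H_one, mul_one]
      omega
    rcases Nat.lt_or_ge s P.L with hL | hL
    · rw [P.H_init s hs1 hL]
      omega
    · have hsL : s = P.L := le_antisymm hs2 hL
      rw [P.H_rec s hL, ← hsL]
      omega

lemma value_ge (l : List ℕ) (h : P.LegalDecomp l) : P.H l.length ≤ P.value l := by
  obtain ⟨hleg, hhead⟩ := h
  have hne := P.isLegal_ne_nil hleg
  match l, hne with
  | a :: rest, _ =>
    rw [P.value_cons]
    simp only [List.headI] at hhead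
    calc P.H (a :: rest).length = 1 * P.H (rest.length + 1) := by simp
    _ ≤ a * P.H (rest.length + 1) := Nat.mul_le_mul_right _ hhead
    _ ≤ _ := Nat.le_add_right _ _

lemma mem_omega_iff {l : List ℕ} {n : ℕ} (hn : 1 ≤ n) :
    l ∈ P.Omega n ↔ P.LegalDecomp l ∧ l.length = n := by
  constructor
  · rintro ⟨hld, hlo, hhi⟩
    refine ⟨hld, ?_⟩
    by_contra hne
    have hnil := P.isLegal_ne_nil hld.1
    have hpos : 1 ≤ l.length := List.length_pos_iff.mpr hnil
    have h1 := P.value_ge l hld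
    have h2 := P.value_lt l hld.1
    rcases Nat.lt_or_ge l.length n with h | h
    · have : P.H (l.length + 1) ≤ P.H n := P.H_mono (by omega) (by omega)
      omega
    · have hgt : n < l.length := by omega
      have : P.H (n + 1) ≤ P.H l.length := P.H_mono (by omega) (by omega)
      omega
  · rintro ⟨hld, hlen⟩
    exact ⟨hld, by rw [← hlen]; exact P.value_ge l hld, by rw [← hlen]; exact P.value_lt l hld.1⟩

end PLRS

namespace PLRS

variable (P : PLRS)

/-- A chain of blocks: all blocks Type 2 except the last, which is Type 1 or Type 2. -/
inductive Chain (P : PLRS) : List (List ℕ) → Prop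
  | last1 (b : List ℕ) (h : P.IsType1Block b) : Chain P [b]
  | last2 (b : List ℕ) (h : P.IsType2Block b) : Chain P [b]
  | cons (b : List ℕ) (B : List (List ℕ)) (h : P.IsType2Block b) (hB : Chain P B) :
      Chain P (b :: B)

lemma type1_len {b : List ℕ} (h : P.IsType1Block b) : 1 ≤ b.length ∧ b.length ≤ P.L := by
  obtain ⟨m, h1, h2, rfl⟩ := h; simp; omega

lemma type2_len {b : List ℕ} (h : P.IsType2Block b) : 1 ≤ b.length ∧ b.length ≤ P.L := by
  obtain ⟨s, h1, h2, a, ha, rfl⟩ := h; simp; omega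

lemma chain_ne_nil {B : List (List ℕ)} (h : P.Chain B) : B ≠ [] := by
  cases h <;> simp

lemma chain_blocks_len {B : List (List ℕ)} (h : P.Chain B) :
    ∀ b ∈ B, 1 ≤ b.length ∧ b.length ≤ P.L := by
  induction h with
  | last1 b hb => simpa using P.type1_len hb
  | last2 b hb => simpa using P.type2_len hb
  | cons b B hb hB ih =>
    intro x hx
    rw [List.mem_cons] at hx
    rcases hx with rfl | hx
    · exact P.type2_len hb
    · exact ih x hx

lemma isLegal_iff_chain {l : List ℕ} : P.IsLegal l ↔ ∃ B, P.Chain B ∧ B.flatten = l := by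
  constructor
  · intro h
    induction h with
    | cond1 m h1 h2 =>
      exact ⟨[(List.range m).map fun i => P.c (i + 1)],
        Chain.last1 _ ⟨m, h1, h2, rfl⟩, by simp⟩
    | cond2 s hs1 hs2 a ha rest hrest ih =>
      obtain ⟨B, hB, hBf⟩ := ih
      refine ⟨(((List.range (s - 1)).map fun i => P.c (i + 1)) ++ [a]) :: B,
        Chain.cons _ _ ⟨s, hs1, hs2, a, ha, rfl⟩ hB, ?_⟩
      simp [hBf]
    | cond2_last s hs1 hs2 a ha =>
      exact ⟨[((List.range (s - 1)).map fun i => P.c (i + 1)) ++ [a]],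
        Chain.last2 _ ⟨s, hs1, hs2, a, ha, rfl⟩, by simp⟩
  · rintro ⟨B, hB, rfl⟩
    induction hB with
    | last1 b hb =>
      obtain ⟨m, h1, h2, rfl⟩ := hb
      simpa using IsLegal.cond1 m h1 h2
    | last2 b hb =>
      obtain ⟨s, h1, h2, a, ha, rfl⟩ := hb
      simpa using IsLegal.cond2_last s h1 h2 a ha
    | cons b B hb hBc ih =>
      obtain ⟨s, h1, h2, a, ha, rfl⟩ := hb
      have : ((((List.range (s - 1)).map fun i => P.c (i + 1)) ++ [a]) :: B).flatten
          = (((List.range (s - 1)).map fun i => P.c (i + 1))) ++ a :: B.flatten := by simp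
      rw [this]
      exact IsLegal.cond2 s h1 h2 a ha _ ih

lemma find?_range'_eq_some {p : ℕ → Bool} {st n k : ℕ} (h1 : st ≤ k) (h2 : k < st + n)
    (hmin : ∀ i, st ≤ i → i < k → p i = false) (hp : p k = true) :
    (List.range' st n).find? p = some k := by
  induction n generalizing st with
  | zero => omega
  | succ n ih =>
    rw [List.range'_succ, List.find?_cons]
    rcases eq_or_lt_of_le h1 with rfl | h
    · simp [hp]
    · have hst : p st = false := hmin st le_rfl h
      simp only [hst]
      exact ih (by omega) (by omega) (fun i hi1 hi2 => hmin i (by omega) hi2)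

lemma find?_range_eq_some {p : ℕ → Bool} {n k : ℕ} (h2 : k < n)
    (hmin : ∀ i, i < k → p i = false) (hp : p k = true) :
    (List.range n).find? p = some k := by
  rw [List.range_eq_range']
  exact find?_range'_eq_some (Nat.zero_le _) (by omega) (fun i _ hi => hmin i hi) hp

lemma getD_prefix (k i : ℕ) (xs : List ℕ) (hi : i < k) :
    (((List.range k).map fun j => P.c (j + 1)) ++ xs).getD i 0 = P.c (i + 1) := by
  rw [List.getD_append _ _ _ _ (by simpa using hi),
    List.getD_eq_getElem _ _ (by simpa using hi)]
  simp

lemma fm_type2 {s : ℕ} (hs1 : 1 ≤ s) (a : ℕ) (ha : a ≠ P.c s) (rest : List ℕ) :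
    P.firstMismatch (((List.range (s - 1)).map fun i => P.c (i + 1)) ++ a :: rest)
      = some (s - 1) := by
  unfold firstMismatch
  apply find?_range_eq_some
  · simp only [List.length_append, List.length_map, List.length_range, List.length_cons]
    omega
  · intro i hi
    rw [P.getD_prefix (s - 1) i _ hi]
    simp
  · have : (((List.range (s - 1)).map fun i => P.c (i + 1)) ++ a :: rest).getD (s - 1) 0
        = a := by
      rw [List.getD_append_right _ _ _ _ (by simp)]
      simp
    rw [this]
    have h1 : s - 1 + 1 = s := by omega
    rw [h1]
    exact bne_iff_ne.mpr ha

lemma fm_type1 (m : ℕ) :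
    P.firstMismatch ((List.range m).map fun i => P.c (i + 1)) = none := by
  unfold firstMismatch
  rw [List.find?_eq_none]
  intro i hi
  simp only [List.mem_range, List.length_map, List.length_range] at hi
  have : ((List.range m).map fun j => P.c (j + 1)).getD i 0 = P.c (i + 1) := by
    have := P.getD_prefix m i [] hi
    simpa using this
  rw [this]
  simp

lemma blocks_of_ne {l : List ℕ} (h : l ≠ []) :
    P.blocks l = match P.firstMismatch l with
      | none => [l]
      | some i => l.take (i + 1) :: P.blocks (l.drop (i + 1)) := by
  rw [blocks]
  simp [h]

lemma blocks_of_fm_none {l : List ℕ} (h : l ≠ []) (hfm : P.firstMismatch l = none) :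
    P.blocks l = [l] := by
  rw [P.blocks_of_ne h, hfm]

lemma blocks_of_fm_some {l : List ℕ} {i : ℕ} (h : l ≠ []) (hfm : P.firstMismatch l = some i) :
    P.blocks l = l.take (i + 1) :: P.blocks (l.drop (i + 1)) := by
  rw [P.blocks_of_ne h, hfm]

lemma blocks_nil : P.blocks [] = [] := by rw [blocks]; simp

lemma blocks_flatten {B : List (List ℕ)} (hB : P.Chain B) : P.blocks B.flatten = B := by
  induction hB with
  | last1 b hb =>
    obtain ⟨m, h1, h2, rfl⟩ := hb
    have hne : ((List.range m).map fun i => P.c (i + 1)) ≠ [] := by simp; omega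
    rw [show ([((List.range m).map fun i => P.c (i + 1))] : List (List ℕ)).flatten
      = (List.range m).map fun i => P.c (i + 1) by simp]
    rw [P.blocks_of_fm_none hne (P.fm_type1 m)]
  | last2 b hb =>
    obtain ⟨s, h1, h2, a, ha, rfl⟩ := hb
    set b := ((List.range (s - 1)).map fun i => P.c (i + 1)) ++ [a] with hb_def
    have hflat : ([b] : List (List ℕ)).flatten = b := by simp
    have hne : b ≠ [] := by simp [hb_def]
    have hfm : P.firstMismatch b = some (s - 1) := P.fm_type2 h1 a (Nat.ne_of_lt ha) []
    have hlen : b.length = s - 1 + 1 := by simp [hb_def]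
    have htake : b.take (s - 1 + 1) = b := by rw [← hlen, List.take_length]
    have hdrop : b.drop (s - 1 + 1) = [] := by rw [← hlen, List.drop_length]
    rw [hflat, P.blocks_of_fm_some hne hfm, htake, hdrop, P.blocks_nil]
  | cons b B hb hBc ih =>
    obtain ⟨s, h1, h2, a, ha, rfl⟩ := hb
    set b := ((List.range (s - 1)).map fun i => P.c (i + 1)) ++ [a] with hb_def
    have hflat : ((b :: B).flatten : List ℕ) = b ++ B.flatten := by simp
    have hform : b ++ B.flatten
        = ((List.range (s - 1)).map fun i => P.c (i + 1)) ++ a :: B.flatten := by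
      simp [hb_def]
    have hne : b ++ B.flatten ≠ [] := by simp [hb_def]
    have hfm : P.firstMismatch (b ++ B.flatten) = some (s - 1) := by
      rw [hform]; exact P.fm_type2 h1 a (Nat.ne_of_lt ha) B.flatten
    have hlen : b.length = s - 1 + 1 := by simp [hb_def]
    have htake : (b ++ B.flatten).take (s - 1 + 1) = b := by rw [← hlen, List.take_left]
    have hdrop : (b ++ B.flatten).drop (s - 1 + 1) = B.flatten := by
      rw [← hlen, List.drop_left]
    rw [hflat, P.blocks_of_fm_some hne hfm, htake, hdrop, ih]

lemma chain_append {C D : List (List ℕ)} (hC : ∀ b ∈ C, P.IsType2Block b) (hD : P.Chain D) :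
    P.Chain (C ++ D) := by
  induction C with
  | nil => simpa
  | cons b C ih =>
    exact Chain.cons _ _ (hC b (by simp)) (ih (fun x hx => hC x (by simp [hx])))

lemma chain_dropLast {B : List (List ℕ)} (hB : P.Chain B) :
    ∀ b ∈ B.dropLast, P.IsType2Block b := by
  induction hB with
  | last1 b hb => simp
  | last2 b hb => simp
  | cons b B hb hBc ih =>
    intro x hx
    rw [List.dropLast_cons_of_ne_nil (P.chain_ne_nil hBc), List.mem_cons] at hx
    rcases hx with rfl | hx
    · exact hb
    · exact ih x hx

lemma chain_cons_elim {b : List ℕ} {B : List (List ℕ)} (h : P.Chain (b :: B)) :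
    B = [] ∨ P.Chain B := by
  cases h with
  | last1 b hb => exact Or.inl rfl
  | last2 b hb => exact Or.inl rfl
  | cons b B hb hBc => exact Or.inr hBc

lemma chain_suffix {C D : List (List ℕ)} (h : P.Chain (C ++ D)) (hD : D ≠ []) : P.Chain D := by
  induction C with
  | nil => simpa using h
  | cons b C ih =>
    rw [List.cons_append] at h
    rcases P.chain_cons_elim h with h0 | h1
    · rcases List.append_eq_nil_iff.mp h0 with ⟨-, h2⟩
      exact absurd h2 hD
    · exact ih h1

lemma sum_map_range_c (k : ℕ) :
    ((List.range k).map fun i => P.c (i + 1)).sum = ∑ j ∈ Finset.Icc 1 k, P.c j := by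
  induction k with
  | zero => simp
  | succ k ih =>
    rw [List.range_succ, Finset.sum_Icc_succ_top (by omega)]
    simp [ih]

lemma csum_mono {j k : ℕ} (h : j ≤ k) :
    ∑ i ∈ Finset.Icc 1 j, P.c i ≤ ∑ i ∈ Finset.Icc 1 k, P.c i :=
  Finset.sum_le_sum_of_subset (Finset.Icc_subset_Icc_right h)

lemma ell_of_block {s : ℕ} (hs1 : 1 ≤ s) (hs2 : s ≤ P.L) {a : ℕ} (ha : a < P.c s) :
    P.ell ((∑ i ∈ Finset.Icc 1 (s - 1), P.c i) + a) = s := by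
  set t := (∑ i ∈ Finset.Icc 1 (s - 1), P.c i) + a with ht_def
  have hmem : s ∈ {s' : ℕ | t < ∑ i ∈ Finset.Icc 1 s', P.c i} := by
    simp only [Set.mem_setOf_eq]
    obtain ⟨s', rfl⟩ : ∃ s', s = s' + 1 := ⟨s - 1, by omega⟩
    rw [Finset.sum_Icc_succ_top (by omega)]
    simp only [Nat.add_sub_cancel] at ht_def ⊢
    omega
  have hlb : ∀ x ∈ {s' : ℕ | t < ∑ i ∈ Finset.Icc 1 s', P.c i}, s ≤ x := by
    intro x hx
    by_contra hlt
    push_neg at hlt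
    simp only [Set.mem_setOf_eq] at hx
    have : ∑ i ∈ Finset.Icc 1 x, P.c i ≤ ∑ i ∈ Finset.Icc 1 (s - 1), P.c i :=
      P.csum_mono (by omega)
    omega
  exact le_antisymm (Nat.sInf_le hmem) (le_csInf ⟨s, hmem⟩ hlb)

lemma block_sum {s : ℕ} (a : ℕ) :
    ((((List.range (s - 1)).map fun i => P.c (i + 1)) ++ [a]) : List ℕ).sum
      = (∑ i ∈ Finset.Icc 1 (s - 1), P.c i) + a := by
  rw [List.sum_append, P.sum_map_range_c]
  simp

lemma ell_spec {t : ℕ} (ht : t < P.size) :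
    1 ≤ P.ell t ∧ P.ell t ≤ P.L ∧ (∑ i ∈ Finset.Icc 1 (P.ell t - 1), P.c i) ≤ t ∧
      t < ∑ i ∈ Finset.Icc 1 (P.ell t), P.c i := by
  have hLmem : P.L ∈ {s' : ℕ | t < ∑ i ∈ Finset.Icc 1 s', P.c i} := ht
  have hne : {s' : ℕ | t < ∑ i ∈ Finset.Icc 1 s', P.c i}.Nonempty := ⟨P.L, hLmem⟩
  have hmem : t < ∑ i ∈ Finset.Icc 1 (P.ell t), P.c i := Nat.sInf_mem hne
  have h1 : 1 ≤ P.ell t := by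
    rcases Nat.eq_zero_or_pos (P.ell t) with h0 | h
    · rw [h0] at hmem; simp at hmem
    · exact h
  have h2 : P.ell t ≤ P.L := Nat.sInf_le hLmem
  have h3 : (∑ i ∈ Finset.Icc 1 (P.ell t - 1), P.c i) ≤ t := by
    by_contra h
    push_neg at h
    have hd : P.ell t = sInf {s' : ℕ | t < ∑ i ∈ Finset.Icc 1 s', P.c i} := rfl
    have hnm : P.ell t - 1 ∉ {s' : ℕ | t < ∑ i ∈ Finset.Icc 1 s', P.c i} :=
      Nat.notMem_of_lt_sInf (by rw [← hd]; omega)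
    exact hnm h
  exact ⟨h1, h2, h3, hmem⟩

lemma type2Block_isType2 {t : ℕ} (ht : t < P.size) : P.IsType2Block (P.type2Block t) := by
  obtain ⟨h1, h2, h3, h4⟩ := P.ell_spec ht
  refine ⟨P.ell t, h1, h2, t - ∑ i ∈ Finset.Icc 1 (P.ell t - 1), P.c i, ?_, rfl⟩
  obtain ⟨s', hs'⟩ : ∃ s', P.ell t = s' + 1 := ⟨P.ell t - 1, by omega⟩
  rw [hs'] at h3 h4 ⊢
  simp only [Nat.add_sub_cancel] at h3 ⊢
  rw [Finset.sum_Icc_succ_top (by omega)] at h4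
  omega

lemma type2Block_sum {t : ℕ} (ht : t < P.size) : (P.type2Block t).sum = t := by
  obtain ⟨h1, h2, h3, h4⟩ := P.ell_spec ht
  unfold type2Block
  rw [P.block_sum]
  omega

lemma type2Block_length {t : ℕ} (ht : t < P.size) : (P.type2Block t).length = P.ell t := by
  obtain ⟨h1, h2, h3, h4⟩ := P.ell_spec ht
  unfold type2Block
  simp
  omega

lemma type2_eq_of_sum {b : List ℕ} (hb : P.IsType2Block b) : b = P.type2Block b.sum := by
  obtain ⟨s, h1, h2, a, ha, rfl⟩ := hb
  rw [P.block_sum]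
  have hell := P.ell_of_block h1 h2 ha
  unfold type2Block
  rw [hell]
  congr 1
  simp

end PLRS

namespace PLRS

variable (P : PLRS)

lemma flatten_len_le {B : List (List ℕ)} (h : ∀ b ∈ B, b.length ≤ P.L) :
    B.flatten.length ≤ B.length * P.L := by
  induction B with
  | nil => simp
  | cons b B ih =>
    simp only [List.flatten_cons, List.length_append, List.length_cons]
    have h1 := h b (by simp)
    have h2 := ih (fun x hx => h x (by simp [hx]))
    calc b.length + B.flatten.length ≤ P.L + B.length * P.L := by omega
    _ = (B.length + 1) * P.L := by ring

lemma exists_concat2 {α : Type*} {B : List α} (h : 2 ≤ B.length) :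
    ∃ C b b', B = C ++ [b, b'] := by
  rcases List.eq_nil_or_concat B with rfl | ⟨B1, b', rfl⟩
  · simp at h
  rcases List.eq_nil_or_concat B1 with rfl | ⟨C, b, rfl⟩
  · simp at h
  exact ⟨C, b, b', by simp⟩

lemma headI_flatten {c0 : List ℕ} (h : c0 ≠ []) (R : List (List ℕ)) :
    ((c0 :: R).flatten).headI = c0.headI := by
  cases c0 with
  | nil => exact absurd rfl h
  | cons x xs => simp

lemma struct2 {l : List ℕ} {n : ℕ} (hn : P.L < n) (hl : l ∈ P.Omega n) :
    ∃ C b'', P.blocks l = C ++ [b''] ∧ C ≠ [] ∧ (∀ x ∈ C, P.IsType2Block x) ∧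
      P.Chain [b''] ∧ (C ++ [b'']).flatten = l ∧ l.length = n ∧ 0 < l.headI := by
  have hn1 : 1 ≤ n := by omega
  obtain ⟨⟨hleg, hhead⟩, hlen⟩ := (P.mem_omega_iff hn1).mp hl
  obtain ⟨B, hB, hBf⟩ := P.isLegal_iff_chain.mp hleg
  have hblocks : P.blocks l = B := by rw [← hBf]; exact P.blocks_flatten hB
  have hBlen : 2 ≤ B.length := by
    by_contra hc
    push_neg at hc
    have h1 : B.flatten.length ≤ B.length * P.L :=
      P.flatten_len_le (fun b hb => (P.chain_blocks_len hB b hb).2)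
    rw [hBf, hlen] at h1
    have : B.length * P.L ≤ 1 * P.L := Nat.mul_le_mul_right _ (by omega)
    omega
  rcases List.eq_nil_or_concat B with rfl | ⟨C, b'', rfl⟩
  · simp at hBlen
  have hC : C ≠ [] := by
    rintro rfl
    simp at hBlen
  simp only [List.concat_eq_append] at hB hBf hblocks
  refine ⟨C, b'', hblocks, hC, ?_, ?_, hBf, hlen, hhead⟩
  · intro x hx
    exact P.chain_dropLast hB _ (by rw [List.dropLast_concat]; exact hx)
  · exact P.chain_suffix hB (by simp)

lemma struct3 {l : List ℕ} {n : ℕ} (hn : 2 * P.L < n) (hl : l ∈ P.Omega n) :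
    ∃ C b b', P.blocks l = C ++ [b, b'] ∧ C ≠ [] ∧ (∀ x ∈ C, P.IsType2Block x) ∧
      P.IsType2Block b ∧ P.Chain [b'] ∧ (C ++ [b, b']).flatten = l ∧
      l.length = n ∧ 0 < l.headI := by
  have hn1 : 1 ≤ n := by have := P.L_pos; omega
  obtain ⟨⟨hleg, hhead⟩, hlen⟩ := (P.mem_omega_iff hn1).mp hl
  obtain ⟨B, hB, hBf⟩ := P.isLegal_iff_chain.mp hleg
  have hblocks : P.blocks l = B := by rw [← hBf]; exact P.blocks_flatten hB
  have hBlen : 3 ≤ B.length := by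
    by_contra hc
    push_neg at hc
    have h1 : B.flatten.length ≤ B.length * P.L :=
      P.flatten_len_le (fun b hb => (P.chain_blocks_len hB b hb).2)
    rw [hBf, hlen] at h1
    have : B.length * P.L ≤ 2 * P.L := Nat.mul_le_mul_right _ (by omega)
    omega
  obtain ⟨C, b, b', rfl⟩ := exists_concat2 (B := B) (by omega)
  have hC : C ≠ [] := by
    rintro rfl
    simp at hBlen
  have hdl : (C ++ [b, b']).dropLast = C ++ [b] := by
    rw [show (C ++ [b, b'] : List (List ℕ)) = (C ++ [b]) ++ [b'] by simp,
      List.dropLast_concat]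
  refine ⟨C, b, b', hblocks, hC, ?_, ?_, ?_, hBf, hlen, hhead⟩
  · intro x hx
    exact P.chain_dropLast hB _ (by rw [hdl]; exact List.mem_append_left _ hx)
  · exact P.chain_dropLast hB _ (by rw [hdl]; simp)
  · exact P.chain_suffix (C := C ++ [b]) (by simpa using hB) (by simp)

lemma main_fwd {n t : ℕ} (hn : 2 * P.L < n) (ht : t < P.size)
    {l : List ℕ} (hl : l ∈ P.Omega n ∩ {l | P.Z l = t}) :
    P.removeSTL l ∈ P.Omega (n - P.ell t) ∧ P.insertSTL t (P.removeSTL l) = l := by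
  obtain ⟨hlΩ, hZ⟩ := hl
  obtain ⟨he1, he2, -, -⟩ := P.ell_spec ht
  obtain ⟨C, b, b', hblocks, hC, hCT2, hbT2, hb'c, hflat, hlen, hhead⟩ := P.struct3 hn hlΩ
  have hrev : (C ++ [b, b']).reverse = b' :: b :: C.reverse := by simp
  have hstl : P.stlBlock l = b := by
    unfold stlBlock
    rw [hblocks, hrev]
    rfl
  have hbsum : b.sum = t := by
    have : P.Z l = b.sum := by unfold Z; rw [hstl]
    rw [← this]; exact hZ
  have hbeq : b = P.type2Block t := by
    have := P.type2_eq_of_sum hbT2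
    rwa [hbsum] at this
  have hblen : b.length = P.ell t := by rw [hbeq]; exact P.type2Block_length ht
  have hrm : P.removeSTL l = (C ++ [b']).flatten := by
    unfold removeSTL
    rw [hblocks, hrev]
    simp [List.eraseIdx]
  have hchain : P.Chain (C ++ [b']) := P.chain_append hCT2 hb'c
  have hrmblocks : P.blocks (P.removeSTL l) = C ++ [b'] := by
    rw [hrm]; exact P.blocks_flatten hchain
  have hleg : P.IsLegal (P.removeSTL l) := by
    rw [hrm]; exact P.isLegal_iff_chain.mpr ⟨_, hchain, rfl⟩
  obtain ⟨c0, C2, rfl⟩ := List.exists_cons_of_ne_nil hC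
  have hc0 : c0 ≠ [] := by
    have := P.type2_len (hCT2 c0 (by simp))
    intro h; rw [h] at this; simp at this
  have hheads : (P.removeSTL l).headI = l.headI := by
    rw [hrm, ← hflat, List.cons_append, List.cons_append,
      headI_flatten hc0, headI_flatten hc0]
  have hlength : (P.removeSTL l).length = n - P.ell t := by
    have h1 : l.length = C2.flatten.length + c0.length + (b.length + b'.length) := by
      rw [← hflat]; simp; omega
    have h2 : (P.removeSTL l).length = C2.flatten.length + c0.length + b'.length := by
      rw [hrm]; simp; omega
    omega
  have hmem : P.removeSTL l ∈ P.Omega (n - P.ell t) := by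
    rw [P.mem_omega_iff (by omega)]
    exact ⟨⟨hleg, by rw [hheads]; exact hhead⟩, hlength⟩
  refine ⟨hmem, ?_⟩
  unfold insertSTL
  rw [hrmblocks]
  have hrev2 : ((c0 :: C2) ++ [b'] : List (List ℕ)).reverse = b' :: (c0 :: C2).reverse := by
    simp
  rw [hrev2]
  have hins : (b' :: (c0 :: C2).reverse).insertIdx 1 (P.type2Block t)
      = b' :: P.type2Block t :: (c0 :: C2).reverse := by
    simp [List.insertIdx]
  rw [hins, ← hbeq, ← hflat]
  simp

lemma main_bwd {n t : ℕ} (hn : 2 * P.L < n) (ht : t < P.size)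
    {l' : List ℕ} (hl' : l' ∈ P.Omega (n - P.ell t)) :
    P.insertSTL t l' ∈ P.Omega n ∩ {l | P.Z l = t} ∧ P.removeSTL (P.insertSTL t l') = l' := by
  obtain ⟨he1, he2, -, -⟩ := P.ell_spec ht
  have hn' : P.L < n - P.ell t := by omega
  obtain ⟨C, b'', hblocks, hC, hCT2, hb''c, hflat, hlen, hhead⟩ := P.struct2 hn' hl'
  set blk := P.type2Block t with hblk
  have hblkT2 : P.IsType2Block blk := P.type2Block_isType2 ht
  have hblklen : blk.length = P.ell t := P.type2Block_length ht
  have hblksum : blk.sum = t := P.type2Block_sum ht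
  have hins : P.insertSTL t l' = (C ++ [blk, b'']).flatten := by
    unfold insertSTL
    rw [hblocks]
    have hrev : (C ++ [b''] : List (List ℕ)).reverse = b'' :: C.reverse := by simp
    rw [hrev]
    have h2 : (b'' :: C.reverse).insertIdx 1 blk = b'' :: blk :: C.reverse := by
      simp [List.insertIdx]
    rw [h2]
    simp
  have hchain : P.Chain (C ++ [blk, b'']) :=
    P.chain_append hCT2 (Chain.cons _ _ hblkT2 hb''c)
  have hinsblocks : P.blocks (P.insertSTL t l') = C ++ [blk, b''] := by
    rw [hins]; exact P.blocks_flatten hchain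
  have hleg : P.IsLegal (P.insertSTL t l') := by
    rw [hins]; exact P.isLegal_iff_chain.mpr ⟨_, hchain, rfl⟩
  obtain ⟨c0, C2, rfl⟩ := List.exists_cons_of_ne_nil hC
  have hc0 : c0 ≠ [] := by
    have := P.type2_len (hCT2 c0 (by simp))
    intro h; rw [h] at this; simp at this
  have hheads : (P.insertSTL t l').headI = l'.headI := by
    rw [hins, ← hflat, List.cons_append, List.cons_append,
      headI_flatten hc0, headI_flatten hc0]
  have hlength : (P.insertSTL t l').length = n := by
    have h1 : l'.length = C2.flatten.length + c0.length + b''.length := by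
      rw [← hflat]; simp; omega
    have h2 : (P.insertSTL t l').length
        = C2.flatten.length + c0.length + (blk.length + b''.length) := by
      rw [hins]; simp; omega
    omega
  have hmemΩ : P.insertSTL t l' ∈ P.Omega n := by
    rw [P.mem_omega_iff (by omega)]
    exact ⟨⟨hleg, by rw [hheads]; exact hhead⟩, hlength⟩
  have hZ : P.Z (P.insertSTL t l') = t := by
    unfold Z stlBlock
    rw [hinsblocks]
    have hrev : ((c0 :: C2) ++ [blk, b''] : List (List ℕ)).reverse
        = b'' :: blk :: (c0 :: C2).reverse := by simp
    rw [hrev]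
    exact hblksum
  refine ⟨⟨hmemΩ, hZ⟩, ?_⟩
  unfold removeSTL
  rw [hinsblocks]
  have hrev : ((c0 :: C2) ++ [blk, b''] : List (List ℕ)).reverse
      = b'' :: blk :: (c0 :: C2).reverse := by simp
  rw [hrev]
  have herase : (b'' :: blk :: (c0 :: C2).reverse).eraseIdx 1 = b'' :: (c0 :: C2).reverse := by
    rfl
  rw [herase, ← hflat]
  simp

end PLRS

open PLRS

/-- For `n > 2L` and `0 ≤ t < S`, removing the second-to-last block maps
`S_t = {ω ∈ Ω_n : Z_n ω = t}` into `Ω_{n - ℓ(t)}`, and is a bijection between them. -/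
theorem removeSTL_bijOn (P : PLRS) (n t : ℕ) (hn : 2 * P.L < n) (ht : t < P.size) :
    (∀ l ∈ P.Omega n ∩ {l | P.Z l = t}, P.removeSTL l ∈ P.Omega (n - P.ell t)) ∧
    Set.BijOn P.removeSTL (P.Omega n ∩ {l | P.Z l = t}) (P.Omega (n - P.ell t)) := by
  have hmt : Set.MapsTo P.removeSTL (P.Omega n ∩ {l | P.Z l = t}) (P.Omega (n - P.ell t)) :=
    fun l hl => (P.main_fwd hn ht hl).1
  have hmt' : Set.MapsTo (P.insertSTL t) (P.Omega (n - P.ell t)) (P.Omega n ∩ {l | P.Z l = t}) :=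
    fun l' hl' => (P.main_bwd hn ht hl').1
  have hinv : Set.InvOn (P.insertSTL t) P.removeSTL
      (P.Omega n ∩ {l | P.Z l = t}) (P.Omega (n - P.ell t)) :=
    ⟨fun l hl => (P.main_fwd hn ht hl).2, fun l' hl' => (P.main_bwd hn ht hl').2⟩
  exact ⟨fun l hl => hmt hl, hinv.bijOn hmt hmt'⟩
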